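/- arXiv:2410.20524 — 5 statements merged into one kernel-verified Lean document; each statement's English description precedes it below -/
import Mathlib

section
/- Let B₁ and B₂ be simple skew left braces and α : (B₂,∘) → Aut(B₁,+,∘) a non-trivial group homomorphism, and let B := B₁ ⋊_α B₂. If J̄ is an ideal of B, then either J̄ = {(0,0)}, or J̄ = B, or J̄ = B₁ × {0}, or else J̄ is isomorphic as a skew left brace to B₂ and B is isomorphic as a skew left brace to the direct product of the skew left braces B₁ × {0} and J̄ (the product skew left brace with componentwise operations). -/
/-- A *skew left brace* is a set with two group structures `(B,+)` and `(B,∘)`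
(the latter written multiplicatively) satisfying `a∘(b+c) = a∘b - a + a∘c`.
The two identity elements automatically coincide. -/
class SkewLeftBrace (B : Type*) extends AddGroup B, Group B where
  mul_add_eq : ∀ a b c : B, a * (b + c) = a * b - a + a * c

namespace SkewLeftBrace

variable {B : Type*} [SkewLeftBrace B]

/-- The map `λ_a : b ↦ -a + a∘b`. -/
def lmap (a b : B) : B := -a + a * b

/-- The brace star operation `a*b := -a + a∘b - b`. -/
def bstar (a b : B) : B := -a + a * b - b

/-- `X*Y`: the additive subgroup generated by all `bstar x y`, `x ∈ X`, `y ∈ Y`,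
regarded as a set. -/
def setStar (X Y : Set B) : Set B :=
  ↑(AddSubgroup.closure {z : B | ∃ x ∈ X, ∃ y ∈ Y, z = bstar x y})

/-- Pointwise sum of two subsets. -/
def setSum (X Y : Set B) : Set B := {w : B | ∃ x ∈ X, ∃ y ∈ Y, w = x + y}

/-- `X^Z := {z + x - z : x ∈ X, z ∈ Z}`. -/
def setConj (X Z : Set B) : Set B := {w : B | ∃ x ∈ X, ∃ z ∈ Z, w = z + x + -z}

/-- An ideal of a skew left brace: a subgroup of `(B,+)` which is normal in both
`(B,+)` and `(B,∘)` and invariant under all the maps `λ_a`. -/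
structure IsIdeal (I : Set B) : Prop where
  zero_mem : (0 : B) ∈ I
  add_mem : ∀ ⦃x y : B⦄, x ∈ I → y ∈ I → x + y ∈ I
  neg_mem : ∀ ⦃x : B⦄, x ∈ I → -x ∈ I
  add_conj_mem : ∀ (b : B) ⦃x : B⦄, x ∈ I → b + x + -b ∈ I
  mul_mem : ∀ ⦃x y : B⦄, x ∈ I → y ∈ I → x * y ∈ I
  inv_mem : ∀ ⦃x : B⦄, x ∈ I → x⁻¹ ∈ I
  mul_conj_mem : ∀ (b : B) ⦃x : B⦄, x ∈ I → b * x * b⁻¹ ∈ I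
  lmap_mem : ∀ (a : B) ⦃x : B⦄, x ∈ I → lmap a x ∈ I

/-- A minimal ideal: a nonzero ideal whose only sub-ideals are `{0}` and itself. -/
def IsMinimalIdeal (I : Set B) : Prop :=
  IsIdeal I ∧ I ≠ {0} ∧ ∀ J : Set B, IsIdeal J → J ⊆ I → J = {0} ∨ J = I

theorem mul_zero' (a : B) : a * (0 : B) = a := by
  have h := SkewLeftBrace.mul_add_eq a (0 : B) (0 : B)
  rw [add_zero] at h
  have h2 : a * (0:B) - a = 0 := (right_eq_add.mp h)
  exact sub_eq_zero.mp h2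

theorem zero_eq_one : (0 : B) = 1 := by
  have h := mul_zero' (1 : B)
  rw [one_mul] at h
  exact h

theorem IsIdeal.one_mem {I : Set B} (h : IsIdeal I) : (1 : B) ∈ I :=
  (zero_eq_one (B := B)) ▸ h.zero_mem

variable (B) in
/-- A skew left brace is *semiprime* if `I*I ≠ {0}` for every nonzero ideal `I`. -/
def Semiprime : Prop := ∀ I : Set B, IsIdeal I → I ≠ {0} → setStar I I ≠ {0}

variable (B) in
/-- A skew left brace is *prime*... (and) *simple* if its only ideals are `{0}` and `B`,
and these are distinct. -/
def Simple : Prop :=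
  ({0} : Set B) ≠ Set.univ ∧ ∀ I : Set B, IsIdeal I → I = {0} ∨ I = Set.univ

variable (B) in
/-- A skew left brace is *Artinian* if every descending chain of ideals stabilizes. -/
def Artinian : Prop :=
  ∀ f : ℕ → Set B, (∀ n, IsIdeal (f n)) → (∀ n, f (n + 1) ⊆ f n) →
    ∃ N, ∀ n, N ≤ n → f n = f N

/-- The `*`-products of copies of a fixed set `I`. -/
inductive IsStarPowerOf (I : Set B) : Set B → Prop
  | base : IsStarPowerOf I I
  | star {X Y : Set B} : IsStarPowerOf I X → IsStarPowerOf I Y →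
      IsStarPowerOf I (setStar X Y)

variable (B) in
/-- A skew left brace is *strongly semiprime* if for every nonzero ideal `I`, every
`*`-product of copies of `I` is nonzero. -/
def StronglySemiprime : Prop :=
  ∀ I : Set B, IsIdeal I → I ≠ {0} → ∀ X : Set B, IsStarPowerOf I X → X ≠ {0}

/-- The `*`-products of nonzero ideals. -/
inductive IsStarProdOfNonzeroIdeals : Set B → Prop
  | ideal {I : Set B} : IsIdeal I → I ≠ {0} → IsStarProdOfNonzeroIdeals I
  | star {X Y : Set B} : IsStarProdOfNonzeroIdeals X → IsStarProdOfNonzeroIdeals Y →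
      IsStarProdOfNonzeroIdeals (setStar X Y)

variable (B) in
/-- A skew left brace is *strongly prime* if every `*`-product of nonzero ideals is nonzero. -/
def StronglyPrime : Prop :=
  ∀ X : Set B, IsStarProdOfNonzeroIdeals X → X ≠ {0}

end SkewLeftBrace
namespace SkewLeftBrace

variable {B : Type*} [SkewLeftBrace B]

/-- An ideal, regarded as a skew left brace with the restricted operations. -/
def IsIdeal.brace {I : Set B} (h : IsIdeal I) : SkewLeftBrace I :=
  letI : Zero I := ⟨⟨0, h.zero_mem⟩⟩
  letI : Add I := ⟨fun x y => ⟨x.1 + y.1, h.add_mem x.2 y.2⟩⟩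
  letI : Neg I := ⟨fun x => ⟨-x.1, h.neg_mem x.2⟩⟩
  letI : One I := ⟨⟨1, h.one_mem⟩⟩
  letI : Mul I := ⟨fun x y => ⟨x.1 * y.1, h.mul_mem x.2 y.2⟩⟩
  letI : Inv I := ⟨fun x => ⟨x.1⁻¹, h.inv_mem x.2⟩⟩
  { add := (· + ·)
    zero := 0
    neg := (- ·)
    nsmul := nsmulRec
    zsmul := zsmulRec
    add_assoc := fun a b c => Subtype.ext (add_assoc a.1 b.1 c.1)
    zero_add := fun a => Subtype.ext (zero_add a.1)
    add_zero := fun a => Subtype.ext (add_zero a.1)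
    neg_add_cancel := fun a => Subtype.ext (neg_add_cancel a.1)
    mul := (· * ·)
    one := 1
    inv := (·⁻¹)
    npow := npowRec
    zpow := zpowRec
    mul_assoc := fun a b c => Subtype.ext (mul_assoc a.1 b.1 c.1)
    one_mul := fun a => Subtype.ext (one_mul a.1)
    mul_one := fun a => Subtype.ext (mul_one a.1)
    inv_mul_cancel := fun a => Subtype.ext (inv_mul_cancel a.1)
    mul_add_eq := fun a b c =>
      Subtype.ext (by
        show a.1 * (b.1 + c.1) = a.1 * b.1 + -a.1 + a.1 * c.1
        rw [SkewLeftBrace.mul_add_eq, sub_eq_add_neg]) }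

/-- The direct product of two skew left braces, with componentwise operations. -/
def prodBrace (B₁ B₂ : Type*) [SkewLeftBrace B₁] [SkewLeftBrace B₂] :
    SkewLeftBrace (B₁ × B₂) :=
  { (inferInstance : AddGroup (B₁ × B₂)), (inferInstance : Group (B₁ × B₂)) with
    mul_add_eq := fun a b c =>
      Prod.ext (by simp [SkewLeftBrace.mul_add_eq]) (by simp [SkewLeftBrace.mul_add_eq]) }

/-- Two skew left braces are isomorphic if there is a bijection preserving `+` and `∘`. -/
def IsBraceIsomorphic (A C : Type*) [SkewLeftBrace A] [SkewLeftBrace C] : Prop :=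
  ∃ f : A ≃ C, (∀ x y : A, f (x + y) = f x + f y) ∧ (∀ x y : A, f (x * y) = f x * f y)

/-- A group homomorphism from `(B₂,∘)` to the automorphism group `Aut(B₁,+,∘)` of the
skew left brace `B₁`, presented as an action `act : B₂ → B₁ → B₁` by skew left brace
automorphisms. -/
structure BraceActionHom (B₂ B₁ : Type*) [SkewLeftBrace B₂] [SkewLeftBrace B₁] where
  act : B₂ → B₁ → B₁
  act_bijective : ∀ a : B₂, Function.Bijective (act a)
  act_add : ∀ (a : B₂) (x y : B₁), act a (x + y) = act a x + act a y
  act_mul : ∀ (a : B₂) (x y : B₁), act a (x * y) = act a x * act a y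
  act_hom : ∀ (a b : B₂) (x : B₁), act (a * b) x = act a (act b x)
  act_one : ∀ x : B₁, act (1 : B₂) x = x

variable {B₁ B₂ : Type*} [SkewLeftBrace B₁] [SkewLeftBrace B₂]

theorem BraceActionHom.act_one' (α : BraceActionHom B₂ B₁) (a : B₂) :
    α.act a (1 : B₁) = 1 := by
  have h := α.act_mul a 1 1
  rw [mul_one] at h
  exact mul_eq_left.mp h.symm

/-- The underlying type of the semidirect product of two skew left braces. -/
@[ext]
structure SDP (B₁ B₂ : Type*) where
  fst : B₁
  snd : B₂

/-- The semidirect product `B₁ ⋊_α B₂` of skew left braces: the additive group is the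
direct product, while `(a₁,a₂) ∘ (b₁,b₂) = (a₁ ∘ α_{a₂}(b₁), a₂ ∘ b₂)`. -/
def BraceActionHom.sdp (α : BraceActionHom B₂ B₁) : SkewLeftBrace (SDP B₁ B₂) :=
  letI : Zero (SDP B₁ B₂) := ⟨⟨0, 0⟩⟩
  letI : Add (SDP B₁ B₂) := ⟨fun p q => ⟨p.fst + q.fst, p.snd + q.snd⟩⟩
  letI : Neg (SDP B₁ B₂) := ⟨fun p => ⟨-p.fst, -p.snd⟩⟩
  letI : One (SDP B₁ B₂) := ⟨⟨1, 1⟩⟩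
  letI : Mul (SDP B₁ B₂) := ⟨fun p q => ⟨p.fst * α.act p.snd q.fst, p.snd * q.snd⟩⟩
  letI : Inv (SDP B₁ B₂) := ⟨fun p => ⟨α.act p.snd⁻¹ p.fst⁻¹, p.snd⁻¹⟩⟩
  { add := (· + ·)
    zero := 0
    neg := (- ·)
    nsmul := nsmulRec
    zsmul := zsmulRec
    add_assoc := fun a b c =>
      SDP.ext (add_assoc a.fst b.fst c.fst) (add_assoc a.snd b.snd c.snd)
    zero_add := fun a => SDP.ext (zero_add a.fst) (zero_add a.snd)
    add_zero := fun a => SDP.ext (add_zero a.fst) (add_zero a.snd)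
    neg_add_cancel := fun a => SDP.ext (neg_add_cancel a.fst) (neg_add_cancel a.snd)
    mul := (· * ·)
    one := 1
    inv := (·⁻¹)
    npow := npowRec
    zpow := zpowRec
    mul_assoc := fun a b c =>
      SDP.ext
        (by show (a.fst * α.act a.snd b.fst) * α.act (a.snd * b.snd) c.fst =
              a.fst * α.act a.snd (b.fst * α.act b.snd c.fst)
            rw [α.act_hom, α.act_mul, mul_assoc])
        (mul_assoc a.snd b.snd c.snd)
    one_mul := fun a =>
      SDP.ext (by show (1 : B₁) * α.act 1 a.fst = a.fst; rw [α.act_one, one_mul])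
        (one_mul a.snd)
    mul_one := fun a =>
      SDP.ext (by show a.fst * α.act a.snd (1 : B₁) = a.fst; rw [α.act_one', mul_one])
        (mul_one a.snd)
    inv_mul_cancel := fun a =>
      SDP.ext
        (by show α.act a.snd⁻¹ a.fst⁻¹ * α.act a.snd⁻¹ a.fst = 1
            rw [← α.act_mul, inv_mul_cancel, α.act_one'])
        (inv_mul_cancel a.snd)
    mul_add_eq := fun a b c =>
      SDP.ext
        (by show a.fst * α.act a.snd (b.fst + c.fst) =
              a.fst * α.act a.snd b.fst + -a.fst + a.fst * α.act a.snd c.fst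
            rw [α.act_add, SkewLeftBrace.mul_add_eq, sub_eq_add_neg])
        (by show a.snd * (b.snd + c.snd) = a.snd * b.snd + -a.snd + a.snd * c.snd
            rw [SkewLeftBrace.mul_add_eq, sub_eq_add_neg]) }

end SkewLeftBrace

namespace SkewLeftBrace

variable {B : Type*} [SkewLeftBrace B]

theorem zero_mul' (a : B) : (0 : B) * a = a := by rw [zero_eq_one, one_mul]

theorem zero_inv : ((0 : B))⁻¹ = 0 := by rw [zero_eq_one, inv_one]

/-- If two ideals intersect trivially, their elements commute additively. -/
theorem add_comm_of_inter {I J : Set B} (hI : IsIdeal I) (hJ : IsIdeal J)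
    (h : ∀ x, x ∈ I → x ∈ J → x = 0) {a b : B} (ha : a ∈ I) (hb : b ∈ J) :
    a + b = b + a := by
  have memJ : a + b + -a + -b ∈ J := hJ.add_mem (hJ.add_conj_mem a hb) (hJ.neg_mem hb)
  have memI : a + b + -a + -b ∈ I := by
    have e : b + -a + -b ∈ I := hI.add_conj_mem b (hI.neg_mem ha)
    have e' : a + (b + -a + -b) ∈ I := hI.add_mem ha e
    rw [add_assoc a b, add_assoc a]
    exact e'
  have h2 : a + b + -a + -b = 0 := h _ memI memJ
  rw [← sub_eq_add_neg, ← sub_eq_add_neg] at h2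
  exact sub_eq_iff_eq_add.mp (sub_eq_zero.mp h2)

/-- If two ideals intersect trivially, then `a ∘ b = a + b` for `a ∈ I`, `b ∈ J`. -/
theorem mul_eq_add_of_inter {I J : Set B} (hI : IsIdeal I) (hJ : IsIdeal J)
    (h : ∀ x, x ∈ I → x ∈ J → x = 0) {a b : B} (ha : a ∈ I) (hb : b ∈ J) :
    a * b = a + b := by
  have memJ : bstar a b ∈ J := by
    simp only [bstar, sub_eq_add_neg]
    exact hJ.add_mem (hJ.lmap_mem a hb) (hJ.neg_mem hb)
  have key : a * b = b + lmap b (b⁻¹ * a * b⁻¹⁻¹) := by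
    rw [inv_inv]
    show a * b = b + (-b + b * (b⁻¹ * a * b))
    rw [add_neg_cancel_left, ← mul_assoc, ← mul_assoc, mul_inv_cancel, one_mul]
  have memI : bstar a b ∈ I := by
    have e : b + lmap b (b⁻¹ * a * b⁻¹⁻¹) + -b ∈ I :=
      hI.add_conj_mem b (hI.lmap_mem b (hI.mul_conj_mem b⁻¹ ha))
    have e' : -a + (b + lmap b (b⁻¹ * a * b⁻¹⁻¹) + -b) ∈ I := hI.add_mem (hI.neg_mem ha) e
    show -a + a * b - b ∈ I
    rw [key, sub_eq_add_neg, add_assoc]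
    exact e'
  have h2 : bstar a b = 0 := h _ memI memJ
  have h3 : -a + a * b + -b = 0 := by
    rw [← sub_eq_add_neg]; exact h2
  have h4 : -a + a * b = b := add_neg_eq_zero.mp h3
  have := congrArg (a + ·) h4
  simpa [add_neg_cancel_left] using this

variable {B₁ B₂ : Type*} [SkewLeftBrace B₁] [SkewLeftBrace B₂]

theorem BraceActionHom.act_zero (α : BraceActionHom B₂ B₁) (x : B₁) :
    α.act 0 x = x := by rw [zero_eq_one, α.act_one]

/-- `B₁ × {0}` is an ideal of the semidirect product. -/
theorem sdp_snd_zero_ideal (α : BraceActionHom B₂ B₁) :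
    @IsIdeal _ α.sdp {p : SDP B₁ B₂ | p.snd = 0} := by
  letI := α.sdp
  constructor
  · show (0 : SDP B₁ B₂).snd = 0; rfl
  · intro x y hx hy
    show x.snd + y.snd = 0
    rw [hx, hy, add_zero]
  · intro x hx
    show -x.snd = 0
    rw [hx, neg_zero]
  · intro b x hx
    show b.snd + x.snd + -b.snd = 0
    rw [hx, add_zero, add_neg_cancel]
  · intro x y hx hy
    show x.snd * y.snd = 0
    rw [hx, hy, zero_mul']
  · intro x hx
    show x.snd⁻¹ = 0
    rw [hx, zero_inv]
  · intro b x hx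
    show b.snd * x.snd * b.snd⁻¹ = 0
    rw [hx, mul_zero', mul_inv_cancel, ← zero_eq_one]
  · intro a x hx
    show -a.snd + a.snd * x.snd = 0
    rw [hx, mul_zero', neg_add_cancel]

end SkewLeftBrace

open SkewLeftBrace

/-- Ideals of a semidirect product of simple skew left braces via a non-trivial
action: any ideal is `{0}`, everything, `B₁ × {0}`, or a copy of `B₂` splitting the
product as a direct product. -/
theorem ideal_of_sdp_of_simple {B₁ B₂ : Type*} [SkewLeftBrace B₁] [SkewLeftBrace B₂]
    (h₁ : SkewLeftBrace.Simple B₁) (h₂ : SkewLeftBrace.Simple B₂)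
    (α : BraceActionHom B₂ B₁)
    (hα : ∃ (a : B₂) (x : B₁), α.act a x ≠ x)
    (J : Set (SDP B₁ B₂)) (hJ : @IsIdeal _ α.sdp J) :
    J = {SDP.mk 0 0} ∨ J = Set.univ ∨ J = {p : SDP B₁ B₂ | p.snd = 0} ∨
      (@IsBraceIsomorphic _ B₂ (@IsIdeal.brace _ α.sdp _ hJ) _ ∧
        ∃ hK : @IsIdeal _ α.sdp {p : SDP B₁ B₂ | p.snd = 0},
          @IsBraceIsomorphic (SDP B₁ B₂) _ α.sdp
            (@prodBrace _ _ (@IsIdeal.brace _ α.sdp _ hK) (@IsIdeal.brace _ α.sdp _ hJ))) := by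
  letI := α.sdp
  -- the projection of J to B₂
  set Jsnd : Set B₂ := {y : B₂ | ∃ x : B₁, SDP.mk x y ∈ J} with hJsnd_def
  -- the part of J lying in B₁ × {0}
  set Jker : Set B₁ := {x : B₁ | SDP.mk x (0 : B₂) ∈ J} with hJker_def
  have hJsnd : IsIdeal Jsnd := by
    constructor
    · exact ⟨0, hJ.zero_mem⟩
    · rintro a b ⟨x, hx⟩ ⟨y, hy⟩
      exact ⟨_, hJ.add_mem hx hy⟩
    · rintro a ⟨x, hx⟩
      exact ⟨_, hJ.neg_mem hx⟩
    · rintro b a ⟨x, hx⟩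
      exact ⟨_, hJ.add_conj_mem ⟨0, b⟩ hx⟩
    · rintro a b ⟨x, hx⟩ ⟨y, hy⟩
      exact ⟨_, hJ.mul_mem hx hy⟩
    · rintro a ⟨x, hx⟩
      exact ⟨_, hJ.inv_mem hx⟩
    · rintro b a ⟨x, hx⟩
      exact ⟨_, hJ.mul_conj_mem ⟨1, b⟩ hx⟩
    · rintro c a ⟨x, hx⟩
      exact ⟨_, hJ.lmap_mem ⟨0, c⟩ hx⟩
  have hJker : IsIdeal Jker := by
    constructor
    · exact hJ.zero_mem
    · intro x y hx hy
      have h : SDP.mk (x + y) ((0 : B₂) + 0) ∈ J := hJ.add_mem hx hy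
      rwa [add_zero] at h
    · intro x hx
      have h : SDP.mk (-x) (-(0 : B₂)) ∈ J := hJ.neg_mem hx
      rwa [neg_zero] at h
    · intro b x hx
      have h : SDP.mk (b + x + -b) ((0 : B₂) + 0 + -0) ∈ J := hJ.add_conj_mem ⟨b, 0⟩ hx
      rwa [add_zero, neg_zero, add_zero] at h
    · intro x y hx hy
      have h : SDP.mk (x * α.act 0 y) ((0 : B₂) * 0) ∈ J := hJ.mul_mem hx hy
      rwa [α.act_zero, zero_mul'] at h
    · intro x hx
      have h : SDP.mk (α.act (0 : B₂)⁻¹ x⁻¹) ((0 : B₂)⁻¹) ∈ J := hJ.inv_mem hx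
      rwa [zero_inv, α.act_zero] at h
    · intro b x hx
      have h : SDP.mk ((b * α.act 0 x) * α.act ((0 : B₂) * 0) (α.act (0 : B₂)⁻¹ b⁻¹))
          (((0 : B₂) * 0) * (0 : B₂)⁻¹) ∈ J := hJ.mul_conj_mem ⟨b, 0⟩ hx
      rwa [α.act_zero, zero_mul', zero_inv, α.act_zero, α.act_zero, zero_mul'] at h
    · intro a x hx
      have h : SDP.mk (-a + a * α.act 0 x) (-(0 : B₂) + (0 : B₂) * 0) ∈ J :=
        hJ.lmap_mem ⟨a, 0⟩ hx
      rw [α.act_zero, zero_mul', neg_zero, zero_add] at h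
      exact h
  have hmemJ : ∀ p : SDP B₁ B₂, p ∈ J → p.snd ∈ Jsnd := fun p hp => ⟨p.fst, hp⟩
  rcases h₂.2 Jsnd hJsnd with hs | hs
  · -- J ⊆ B₁ × {0}
    have hsnd0 : ∀ p : SDP B₁ B₂, p ∈ J → p.snd = 0 := by
      intro p hp
      have := hmemJ p hp
      rw [hs] at this
      exact this
    have hfst : ∀ p : SDP B₁ B₂, p ∈ J → p.fst ∈ Jker := by
      intro p hp
      show SDP.mk p.fst 0 ∈ J
      rw [← hsnd0 p hp]
      exact hp
    rcases h₁.2 Jker hJker with hk | hk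
    · left
      apply Set.Subset.antisymm
      · intro p hp
        have h1 : p.fst = 0 := by
          have := hfst p hp; rw [hk] at this; exact this
        have h2 : p.snd = 0 := hsnd0 p hp
        simp only [Set.mem_singleton_iff]
        exact SDP.ext h1 h2
      · intro p hp
        simp only [Set.mem_singleton_iff] at hp
        rw [hp]
        exact hJ.zero_mem
    · right; right; left
      apply Set.Subset.antisymm
      · intro p hp
        exact hsnd0 p hp
      · intro p hp
        have h1 : p.fst ∈ Jker := by rw [hk]; trivial
        have h2 : SDP.mk p.fst 0 ∈ J := h1
        have : p = SDP.mk p.fst 0 := SDP.ext rfl hp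
        rwa [← this] at h2
  · -- J projects onto B₂
    have hsurj : ∀ y : B₂, ∃ x : B₁, SDP.mk x y ∈ J := by
      intro y
      have : y ∈ Jsnd := by rw [hs]; trivial
      exact this
    rcases h₁.2 Jker hJker with hk | hk
    · -- the interesting case: J is a complement of B₁ × {0}
      right; right; right
      have htriv : ∀ p : SDP B₁ B₂, p ∈ J → p.snd = 0 → p = SDP.mk 0 0 := by
        intro p hp hp0
        have h1 : SDP.mk p.fst 0 ∈ J := by rw [← hp0]; exact hp
        have h2 : p.fst ∈ Jker := h1
        rw [hk] at h2
        exact SDP.ext h2 hp0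
      set K : Set (SDP B₁ B₂) := {p : SDP B₁ B₂ | p.snd = 0} with hK_def
      have hK : IsIdeal K := sdp_snd_zero_ideal α
      have htriv' : ∀ p : SDP B₁ B₂, p ∈ K → p ∈ J → p = 0 := by
        intro p hpK hpJ
        exact htriv p hpJ hpK
      have htriv'' : ∀ p : SDP B₁ B₂, p ∈ J → p ∈ K → p = 0 := fun p h1 h2 => htriv' p h2 h1
      constructor
      · -- J ≅ B₂
        letI instJ := @IsIdeal.brace _ α.sdp _ hJ
        have hinj : Function.Injective (fun p : J => (p.1.snd : B₂)) := by
          intro p q hpq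
          simp only at hpq
          have hd : p.1 + -q.1 ∈ J := hJ.add_mem p.2 (hJ.neg_mem q.2)
          have hd0 : (p.1 + -q.1).snd = 0 := by
            show p.1.snd + -q.1.snd = 0
            rw [hpq, add_neg_cancel]
          have := htriv _ hd hd0
          have hq : p.1 = q.1 := by
            have h5 : p.1 + -q.1 = 0 := this
            have := congrArg (· + q.1) h5
            simpa [add_assoc] using this
          exact Subtype.ext hq
        have hsurj' : Function.Surjective (fun p : J => (p.1.snd : B₂)) := by
          intro y
          obtain ⟨x, hx⟩ := hsurj y
          exact ⟨⟨⟨x, y⟩, hx⟩, rfl⟩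
        exact ⟨Equiv.ofBijective _ ⟨hinj, hsurj'⟩, fun x y => rfl, fun x y => rfl⟩
      · refine ⟨hK, ?_⟩
        letI instK := @IsIdeal.brace _ α.sdp _ hK
        letI instJ := @IsIdeal.brace _ α.sdp _ hJ
        letI instP := @prodBrace _ _ instK instJ
        have hcomm : ∀ a ∈ K, ∀ b ∈ J, a + b = b + a := fun a ha b hb =>
          add_comm_of_inter hK hJ htriv' ha hb
        have hma : ∀ a ∈ K, ∀ b ∈ J, a * b = a + b := fun a ha b hb =>
          mul_eq_add_of_inter hK hJ htriv' ha hb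
        have hma' : ∀ a ∈ J, ∀ b ∈ K, a * b = a + b := fun a ha b hb =>
          mul_eq_add_of_inter hJ hK htriv'' ha hb
        set g : K × J → SDP B₁ B₂ := fun p => p.1.1 + p.2.1 with hg_def
        have ginj : Function.Injective g := by
          rintro ⟨k, j⟩ ⟨k', j'⟩ hkj
          simp only [hg_def] at hkj
          have hd : -k'.1 + k.1 ∈ K := hK.add_mem (hK.neg_mem k'.2) k.2
          have hd' : -k'.1 + k.1 = j'.1 + -j.1 := by
            have h5 := congrArg (fun z => -k'.1 + z + -j.1) hkj
            simpa [add_assoc] using h5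
          have hdJ : -k'.1 + k.1 ∈ J := by
            rw [hd']
            exact hJ.add_mem j'.2 (hJ.neg_mem j.2)
          have h0 := htriv' _ hd hdJ
          have hkk : k.1 = k'.1 := by
            have := congrArg (k'.1 + ·) h0
            simpa [add_neg_cancel_left] using this
          have hjj : j'.1 = j.1 := by
            have h6 : j'.1 + -j.1 = 0 := by rw [← hd']; exact h0
            have := congrArg (· + j.1) h6
            simpa [add_assoc] using this
          exact Prod.ext (Subtype.ext hkk) (Subtype.ext hjj.symm)
        have gsurj : Function.Surjective g := by
          intro p
          obtain ⟨x, hx⟩ := hsurj p.snd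
          have hkmem : p + -SDP.mk x p.snd ∈ K := by
            show p.snd + -p.snd = 0
            rw [add_neg_cancel]
          refine ⟨⟨⟨_, hkmem⟩, ⟨_, hx⟩⟩, ?_⟩
          simp only [hg_def]
          rw [neg_add_cancel_right]
        have gadd : ∀ x y : K × J, g (x + y) = g x + g y := by
          rintro ⟨k, j⟩ ⟨k', j'⟩
          show (k.1 + k'.1) + (j.1 + j'.1) = (k.1 + j.1) + (k'.1 + j'.1)
          simp only [add_assoc]
          congr 1
          rw [← add_assoc, ← add_assoc, hcomm _ k'.2 _ j.2]
        have gmul : ∀ x y : K × J, g (x * y) = g x * g y := by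
          rintro ⟨k, j⟩ ⟨k', j'⟩
          show (k.1 * k'.1) + (j.1 * j'.1) = (k.1 + j.1) * (k'.1 + j'.1)
          have hswap : j.1 * k'.1 = k'.1 * j.1 := by
            rw [hma' _ j.2 _ k'.2, ← hcomm _ k'.2 _ j.2, ← hma _ k'.2 _ j.2]
          rw [← hma _ k.2 _ j.2, ← hma _ k'.2 _ j'.2,
            ← hma _ (hK.mul_mem k.2 k'.2) _ (hJ.mul_mem j.2 j'.2)]
          simp only [mul_assoc]
          congr 1
          rw [← mul_assoc, ← mul_assoc, hswap]
        set e := Equiv.ofBijective g ⟨ginj, gsurj⟩ with he_def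
        refine ⟨e.symm, fun x y => ?_, fun x y => ?_⟩
        · apply e.injective
          rw [e.apply_symm_apply]
          have : e (e.symm x + e.symm y) = g (e.symm x + e.symm y) := rfl
          show x + y = g (e.symm x + e.symm y); rw [gadd]
          show x + y = e (e.symm x) + e (e.symm y)
          rw [e.apply_symm_apply, e.apply_symm_apply]
        · apply e.injective
          rw [e.apply_symm_apply]
          have : e (e.symm x * e.symm y) = g (e.symm x * e.symm y) := rfl
          show x * y = g (e.symm x * e.symm y); rw [gmul]
          show x * y = e (e.symm x) * e (e.symm y)
          rw [e.apply_symm_apply, e.apply_symm_apply]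
    · -- J = everything
      right; left
      apply Set.eq_univ_of_forall
      intro p
      obtain ⟨x, hx⟩ := hsurj p.snd
      have h1 : p.fst + -x ∈ Jker := by rw [hk]; trivial
      have h2 : SDP.mk (p.fst + -x) (0 : B₂) ∈ J := h1
      have h3 : SDP.mk (p.fst + -x + x) ((0 : B₂) + p.snd) ∈ J := hJ.add_mem h2 hx
      rw [neg_add_cancel_right, zero_add] at h3
      exact h3
end

section
/- Let B₁ and B₂ be simple skew left braces and α : (B₂,∘) → Aut(B₁,+,∘) a non-trivial group homomorphism. Suppose J is an ideal of B₁ ⋊_α B₂ with J ≠ {(0,0)}, J ≠ B₁ ⋊_α B₂, and J ≠ B₁ × {0}. Then for every (a₁,a₂) ∈ J one has α_{a₂} = i_{a₁} as maps B₁ → B₁, where i_{a₁}(h) := a₁⁻ ∘ h ∘ a₁ and a₁⁻ is the inverse of a₁ in (B₁,∘). -/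
open SkewLeftBrace

/-- If `J` is a non-trivial ideal of `B₁ ⋊_α B₂` different from `B₁ × {0}`, with `B₁`,
`B₂` simple and `α` non-trivial, then `α_{a₂} = i_{a₁}` for every `(a₁,a₂) ∈ J`. -/
theorem act_eq_inner_of_mem_ideal {B₁ B₂ : Type*} [SkewLeftBrace B₁] [SkewLeftBrace B₂]
    (h₁ : SkewLeftBrace.Simple B₁) (h₂ : SkewLeftBrace.Simple B₂)
    (α : BraceActionHom B₂ B₁)
    (hα : ∃ (a : B₂) (x : B₁), α.act a x ≠ x)
    (J : Set (SDP B₁ B₂)) (hJ : @IsIdeal _ α.sdp J)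
    (hJ0 : J ≠ {SDP.mk 0 0}) (hJU : J ≠ Set.univ)
    (hJB₁ : J ≠ {p : SDP B₁ B₂ | p.snd = 0}) :
    ∀ p ∈ J, ∀ h : B₁, α.act p.snd h = p.fst⁻¹ * h * p.fst := by

  letI : SkewLeftBrace (SDP B₁ B₂) := α.sdp
  have z2 : (0:B₂) = 1 := zero_eq_one
  have z1 : (0:B₁) = 1 := zero_eq_one
  have h11 : (1:B₂) + 1 = 1 := by rw [← z2, add_zero]
  have hn1 : -(1:B₂) = 1 := by rw [← z2, neg_zero]
  set I : Set B₁ := {x : B₁ | (⟨x,1⟩ : SDP B₁ B₂) ∈ J} with hIdef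
  have idealI : IsIdeal I := by
    constructor
    · show (⟨(0:B₁),(1:B₂)⟩ : SDP B₁ B₂) ∈ J
      have e : (⟨(0:B₁),(1:B₂)⟩ : SDP B₁ B₂) = 0 := SDP.ext rfl z2.symm
      rw [e]; exact hJ.zero_mem
    · intro x y hx hy
      show (⟨x+y,(1:B₂)⟩ : SDP B₁ B₂) ∈ J
      have e : (⟨x,1⟩ : SDP B₁ B₂) + ⟨y,1⟩ = ⟨x+y,1⟩ := SDP.ext rfl h11
      exact e ▸ hJ.add_mem hx hy
    · intro x hx
      show (⟨-x,(1:B₂)⟩ : SDP B₁ B₂) ∈ J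
      have e : -(⟨x,1⟩ : SDP B₁ B₂) = ⟨-x,1⟩ := SDP.ext rfl hn1
      exact e ▸ hJ.neg_mem hx
    · intro b x hx
      show (⟨b+x+-b,(1:B₂)⟩ : SDP B₁ B₂) ∈ J
      have e : (⟨b,1⟩ : SDP B₁ B₂) + ⟨x,1⟩ + -⟨b,1⟩ = ⟨b+x+-b,1⟩ :=
        SDP.ext rfl (by show (1:B₂) + 1 + -1 = 1; rw [h11, hn1, h11])
      exact e ▸ hJ.add_conj_mem (⟨b,1⟩ : SDP B₁ B₂) hx
    · intro x y hx hy
      show (⟨x*y,(1:B₂)⟩ : SDP B₁ B₂) ∈ J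
      have e : (⟨x,1⟩ : SDP B₁ B₂) * ⟨y,1⟩ = ⟨x*y,1⟩ :=
        SDP.ext (by show x * α.act 1 y = x * y; rw [α.act_one]) (one_mul 1)
      exact e ▸ hJ.mul_mem hx hy
    · intro x hx
      show (⟨x⁻¹,(1:B₂)⟩ : SDP B₁ B₂) ∈ J
      have e : (⟨x,1⟩ : SDP B₁ B₂)⁻¹ = ⟨x⁻¹,1⟩ :=
        SDP.ext (by show α.act (1:B₂)⁻¹ x⁻¹ = x⁻¹; rw [inv_one, α.act_one]) inv_one
      exact e ▸ hJ.inv_mem hx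
    · intro b x hx
      show (⟨b*x*b⁻¹,(1:B₂)⟩ : SDP B₁ B₂) ∈ J
      have e : (⟨b,1⟩ : SDP B₁ B₂) * ⟨x,1⟩ * (⟨b,1⟩ : SDP B₁ B₂)⁻¹ = ⟨b*x*b⁻¹,1⟩ := by
        refine SDP.ext ?_ ?_
        · show (b * α.act 1 x) * α.act ((1:B₂)*1) (α.act (1:B₂)⁻¹ b⁻¹) = b*x*b⁻¹
          simp only [α.act_one, inv_one, one_mul]
        · show (1:B₂) * 1 * (1:B₂)⁻¹ = 1
          simp only [one_mul, inv_one]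
      exact e ▸ hJ.mul_conj_mem (⟨b,1⟩ : SDP B₁ B₂) hx
    · intro a x hx
      show (⟨lmap a x,(1:B₂)⟩ : SDP B₁ B₂) ∈ J
      have e : lmap (⟨a,1⟩ : SDP B₁ B₂) ⟨x,1⟩ = ⟨lmap a x,1⟩ := by
        refine SDP.ext ?_ ?_
        · show -a + a * α.act 1 x = lmap a x
          rw [α.act_one]; rfl
        · show -(1:B₂) + 1 * 1 = 1
          rw [one_mul, neg_add_cancel, z2]
      exact e ▸ hJ.lmap_mem (⟨a,1⟩ : SDP B₁ B₂) hx
  rcases h₁.2 I idealI with hI0 | hIuniv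
  · -- main case: I = {0}
    intro p hp h
    have hc : (⟨h,1⟩ : SDP B₁ B₂) * p * (⟨h,1⟩ : SDP B₁ B₂)⁻¹ * p⁻¹ ∈ J :=
      hJ.mul_mem (hJ.mul_conj_mem _ hp) (hJ.inv_mem hp)
    have hsnd : ((⟨h,1⟩ : SDP B₁ B₂) * p * (⟨h,1⟩ : SDP B₁ B₂)⁻¹ * p⁻¹).snd = 1 := by
      show 1 * p.snd * (1:B₂)⁻¹ * p.snd⁻¹ = 1
      rw [one_mul, inv_one, mul_one, mul_inv_cancel]
    have hfst : ((⟨h,1⟩ : SDP B₁ B₂) * p * (⟨h,1⟩ : SDP B₁ B₂)⁻¹ * p⁻¹).fst ∈ I := by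
      show (⟨((⟨h,1⟩ : SDP B₁ B₂) * p * (⟨h,1⟩ : SDP B₁ B₂)⁻¹ * p⁻¹).fst, (1:B₂)⟩ : SDP B₁ B₂) ∈ J
      have e : (⟨((⟨h,1⟩ : SDP B₁ B₂) * p * (⟨h,1⟩ : SDP B₁ B₂)⁻¹ * p⁻¹).fst, (1:B₂)⟩ : SDP B₁ B₂)
          = (⟨h,1⟩ : SDP B₁ B₂) * p * (⟨h,1⟩ : SDP B₁ B₂)⁻¹ * p⁻¹ := SDP.ext rfl hsnd.symm
      rw [e]; exact hc
    rw [hI0] at hfst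
    have hfst0 : ((⟨h,1⟩ : SDP B₁ B₂) * p * (⟨h,1⟩ : SDP B₁ B₂)⁻¹ * p⁻¹).fst = 0 :=
      Set.mem_singleton_iff.mp hfst
    have hone : (⟨h,1⟩ : SDP B₁ B₂) * p * (⟨h,1⟩ : SDP B₁ B₂)⁻¹ * p⁻¹ = 1 :=
      SDP.ext (by rw [hfst0]; exact z1) hsnd
    have h2 : (⟨h,1⟩ : SDP B₁ B₂) * p * (⟨h,1⟩ : SDP B₁ B₂)⁻¹ = p := by
      have := mul_eq_one_iff_eq_inv.mp hone
      rwa [inv_inv] at this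
    have hcomm : (⟨h,1⟩ : SDP B₁ B₂) * p = p * ⟨h,1⟩ := mul_inv_eq_iff_eq_mul.mp h2
    have hf : h * α.act 1 p.fst = p.fst * α.act p.snd h := congrArg SDP.fst hcomm
    have hf2 : h * p.fst = p.fst * α.act p.snd h := by rw [α.act_one] at hf; exact hf
    rw [mul_assoc, hf2, ← mul_assoc, inv_mul_cancel, one_mul]
  · -- I = univ: derive a contradiction
    exfalso
    have hIall : ∀ x : B₁, (⟨x,1⟩ : SDP B₁ B₂) ∈ J := fun x => by
      have : x ∈ I := hIuniv ▸ Set.mem_univ x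
      exact this
    have idealK : IsIdeal {b : B₂ | ∃ x : B₁, (⟨x,b⟩ : SDP B₁ B₂) ∈ J} := by
      constructor
      · exact ⟨0, hJ.zero_mem⟩
      · rintro a b ⟨x, hx⟩ ⟨y, hy⟩
        exact ⟨x + y, hJ.add_mem hx hy⟩
      · rintro a ⟨x, hx⟩
        exact ⟨-x, hJ.neg_mem hx⟩
      · rintro b a ⟨x, hx⟩
        exact ⟨0 + x + -0, hJ.add_conj_mem (⟨0,b⟩ : SDP B₁ B₂) hx⟩
      · rintro a b ⟨x, hx⟩ ⟨y, hy⟩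
        exact ⟨x * α.act a y, hJ.mul_mem hx hy⟩
      · rintro a ⟨x, hx⟩
        exact ⟨α.act a⁻¹ x⁻¹, hJ.inv_mem hx⟩
      · rintro b a ⟨x, hx⟩
        exact ⟨((⟨1,b⟩ : SDP B₁ B₂) * ⟨x,a⟩ * (⟨1,b⟩ : SDP B₁ B₂)⁻¹).fst,
          hJ.mul_conj_mem (⟨1,b⟩ : SDP B₁ B₂) hx⟩
      · rintro b a ⟨x, hx⟩
        exact ⟨(lmap (⟨1,b⟩ : SDP B₁ B₂) ⟨x,a⟩).fst, hJ.lmap_mem (⟨1,b⟩ : SDP B₁ B₂) hx⟩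
    rcases h₂.2 _ idealK with hK0 | hKU
    · apply hJB₁
      ext p
      constructor
      · intro hp
        have hpK : p.snd ∈ {b : B₂ | ∃ x : B₁, (⟨x,b⟩ : SDP B₁ B₂) ∈ J} := ⟨p.fst, hp⟩
        rw [hK0] at hpK
        exact Set.mem_singleton_iff.mp hpK
      · intro hp
        have e : p = (⟨p.fst,1⟩ : SDP B₁ B₂) := SDP.ext rfl (by rw [hp]; exact z2)
        rw [e]; exact hIall p.fst
    · apply hJU
      ext p
      simp only [Set.mem_univ, iff_true]
      have hpK : p.snd ∈ {b : B₂ | ∃ x : B₁, (⟨x,b⟩ : SDP B₁ B₂) ∈ J} :=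
        hKU ▸ Set.mem_univ _
      obtain ⟨x, hx⟩ := hpK
      have h1 : (⟨p.fst - x, 1⟩ : SDP B₁ B₂) ∈ J := hIall _
      have e : (⟨p.fst - x, 1⟩ : SDP B₁ B₂) + ⟨x, p.snd⟩ = p :=
        SDP.ext (sub_add_cancel p.fst x) (by show (1:B₂) + p.snd = p.snd; rw [← z2, zero_add])
      exact e ▸ hJ.add_mem h1 hx
end

section
/- Let B₁ and B₂ be simple skew left braces and α : (B₂,∘) → Aut(B₁,+,∘) a non-trivial group homomorphism. Suppose moreover that α is not injective and that the group (B₁,∘) has trivial center. Then the only ideals of B₁ ⋊_α B₂ are {(0,0)}, B₁ × {0}, and B₁ ⋊_α B₂; in particular B₁ × {0} is the unique non-trivial ideal of the semidirect product. -/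
open SkewLeftBrace

/-- If `B₁`, `B₂` are simple, `α` is non-trivial and non-injective, and `(B₁,∘)` has
trivial center, then the only ideals of `B₁ ⋊_α B₂` are `{0}`, `B₁ × {0}` and the whole
brace; in particular `B₁ × {0}` is the unique non-trivial ideal. -/
theorem ideals_of_sdp_of_noninjective {B₁ B₂ : Type*} [SkewLeftBrace B₁] [SkewLeftBrace B₂]
    (h₁ : SkewLeftBrace.Simple B₁) (h₂ : SkewLeftBrace.Simple B₂)
    (α : BraceActionHom B₂ B₁)
    (hα : ∃ (a : B₂) (x : B₁), α.act a x ≠ x)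
    (hninj : ¬ ∀ a b : B₂, (∀ x : B₁, α.act a x = α.act b x) → a = b)
    (hcenter : ∀ g : B₁, (∀ h : B₁, g * h = h * g) → g = 1) :
    (∀ I : Set (SDP B₁ B₂), @IsIdeal _ α.sdp I →
        I = {SDP.mk 0 0} ∨ I = {p : SDP B₁ B₂ | p.snd = 0} ∨ I = Set.univ) ∧
      @IsIdeal _ α.sdp {p : SDP B₁ B₂ | p.snd = 0} ∧
      ({p : SDP B₁ B₂ | p.snd = 0} : Set (SDP B₁ B₂)) ≠ {SDP.mk 0 0} ∧
      ({p : SDP B₁ B₂ | p.snd = 0} : Set (SDP B₁ B₂)) ≠ Set.univ := by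
  letI : SkewLeftBrace (SDP B₁ B₂) := α.sdp
  have h01 : (0 : B₁) = 1 := zero_eq_one
  have h02 : (0 : B₂) = 1 := zero_eq_one
  have hact0 : ∀ y : B₁, α.act 0 y = y := fun y => by rw [h02]; exact α.act_one y
  have hinv0 : (0 : B₂)⁻¹ = 0 := by rw [h02]; exact inv_one
  -- Part 2 : {p | p.snd = 0} is an ideal
  have hSideal : IsIdeal {p : SDP B₁ B₂ | p.snd = 0} := by
    constructor
    · rfl
    · intro x y hx hy
      show x.snd + y.snd = 0
      have hx' : x.snd = 0 := hx
      have hy' : y.snd = 0 := hy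
      rw [hx', hy', add_zero]
    · intro x hx
      show -x.snd = 0
      have hx' : x.snd = 0 := hx
      rw [hx', neg_zero]
    · intro b x hx
      show b.snd + x.snd + -b.snd = 0
      have hx' : x.snd = 0 := hx
      rw [hx', add_zero, add_neg_cancel]
    · intro x y hx hy
      show x.snd * y.snd = 0
      have hx' : x.snd = 0 := hx
      have hy' : y.snd = 0 := hy
      rw [hx', hy', mul_zero']
    · intro x hx
      show x.snd⁻¹ = 0
      have hx' : x.snd = 0 := hx
      rw [hx', hinv0]
    · intro b x hx
      show b.snd * x.snd * b.snd⁻¹ = 0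
      have hx' : x.snd = 0 := hx
      rw [hx', mul_zero', mul_inv_cancel]
      exact h02.symm
    · intro a x hx
      show -a.snd + a.snd * x.snd = 0
      have hx' : x.snd = 0 := hx
      rw [hx', mul_zero', neg_add_cancel]
  -- Part 3 : not the zero ideal
  have hex1 : ∃ x : B₁, x ≠ 0 := by
    by_contra h
    push_neg at h
    exact h₁.1 (Set.eq_univ_iff_forall.mpr fun x => (h x : x = 0))
  have hS_ne_zero : ({p : SDP B₁ B₂ | p.snd = 0} : Set (SDP B₁ B₂)) ≠ {SDP.mk 0 0} := by
    intro heq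
    obtain ⟨x, hx⟩ := hex1
    have hm : (⟨x, 0⟩ : SDP B₁ B₂) ∈ {p : SDP B₁ B₂ | p.snd = 0} := rfl
    rw [heq] at hm
    exact hx (congrArg SDP.fst (Set.eq_of_mem_singleton hm))
  -- Part 4 : not everything
  have hex2 : ∃ b : B₂, b ≠ 0 := by
    by_contra h
    push_neg at h
    exact h₂.1 (Set.eq_univ_iff_forall.mpr fun x => (h x : x = 0))
  have hS_ne_univ : ({p : SDP B₁ B₂ | p.snd = 0} : Set (SDP B₁ B₂)) ≠ Set.univ := by
    intro heq
    obtain ⟨b, hb⟩ := hex2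
    have hm : (⟨0, b⟩ : SDP B₁ B₂) ∈ {p : SDP B₁ B₂ | p.snd = 0} := by
      rw [heq]; trivial
    exact hb hm
  refine ⟨?_, hSideal, hS_ne_zero, hS_ne_univ⟩
  intro I hI
  set J : Set B₁ := {x : B₁ | (⟨x, 0⟩ : SDP B₁ B₂) ∈ I} with hJdef
  set P : Set B₂ := {b : B₂ | ∃ x : B₁, (⟨x, b⟩ : SDP B₁ B₂) ∈ I} with hPdef
  have hJ : IsIdeal J := by
    constructor
    · exact (hI.zero_mem : (⟨0,0⟩ : SDP B₁ B₂) ∈ I)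
    · intro x y hx hy
      have hx' : (⟨x, 0⟩ : SDP B₁ B₂) ∈ I := hx
      have hy' : (⟨y, 0⟩ : SDP B₁ B₂) ∈ I := hy
      have h : (⟨x + y, (0:B₂) + 0⟩ : SDP B₁ B₂) ∈ I := hI.add_mem hx' hy'
      rw [add_zero] at h
      exact h
    · intro x hx
      have hx' : (⟨x, 0⟩ : SDP B₁ B₂) ∈ I := hx
      have h : (⟨-x, -(0:B₂)⟩ : SDP B₁ B₂) ∈ I := hI.neg_mem hx'
      rw [neg_zero] at h
      exact h
    · intro b x hx
      have hx' : (⟨x, 0⟩ : SDP B₁ B₂) ∈ I := hx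
      have h : (⟨b + x + -b, (0:B₂) + 0 + -0⟩ : SDP B₁ B₂) ∈ I :=
        hI.add_conj_mem ⟨b, 0⟩ hx'
      rw [add_zero, neg_zero, add_zero] at h
      exact h
    · intro x y hx hy
      have hx' : (⟨x, 0⟩ : SDP B₁ B₂) ∈ I := hx
      have hy' : (⟨y, 0⟩ : SDP B₁ B₂) ∈ I := hy
      have h : (⟨x * α.act 0 y, (0:B₂) * 0⟩ : SDP B₁ B₂) ∈ I := hI.mul_mem hx' hy'
      rw [hact0, mul_zero'] at h
      exact h
    · intro x hx
      have hx' : (⟨x, 0⟩ : SDP B₁ B₂) ∈ I := hx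
      have h : (⟨α.act (0:B₂)⁻¹ x⁻¹, (0:B₂)⁻¹⟩ : SDP B₁ B₂) ∈ I := hI.inv_mem hx'
      rw [hinv0, hact0] at h
      exact h
    · intro b x hx
      have hx' : (⟨x, 0⟩ : SDP B₁ B₂) ∈ I := hx
      have h : (⟨(b * α.act 0 x) * α.act ((0:B₂) * 0) (α.act (0:B₂)⁻¹ b⁻¹),
          ((0:B₂) * 0) * (0:B₂)⁻¹⟩ : SDP B₁ B₂) ∈ I := hI.mul_conj_mem ⟨b, 0⟩ hx'
      simp only [hact0, hinv0, mul_zero'] at h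
      exact h
    · intro a x hx
      have hx' : (⟨x, 0⟩ : SDP B₁ B₂) ∈ I := hx
      have h : (⟨-a + a * α.act 0 x, -(0:B₂) + 0 * 0⟩ : SDP B₁ B₂) ∈ I :=
        hI.lmap_mem ⟨a, 0⟩ hx'
      simp only [hact0, mul_zero', neg_zero, add_zero, zero_add] at h
      exact h
  have hP : IsIdeal P := by
    constructor
    · exact ⟨0, (hI.zero_mem : (⟨0,0⟩ : SDP B₁ B₂) ∈ I)⟩
    · rintro a b ⟨x, hx⟩ ⟨y, hy⟩
      exact ⟨x + y, hI.add_mem hx hy⟩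
    · rintro a ⟨x, hx⟩
      exact ⟨-x, hI.neg_mem hx⟩
    · rintro b a ⟨x, hx⟩
      exact ⟨0 + x + -0, hI.add_conj_mem ⟨0, b⟩ hx⟩
    · rintro a b ⟨x, hx⟩ ⟨y, hy⟩
      exact ⟨x * α.act a y, hI.mul_mem hx hy⟩
    · rintro a ⟨x, hx⟩
      exact ⟨α.act a⁻¹ x⁻¹, hI.inv_mem hx⟩
    · rintro b a ⟨x, hx⟩
      exact ⟨(1 * α.act b x) * α.act (b * a) (α.act b⁻¹ (1:B₁)⁻¹),
        hI.mul_conj_mem ⟨1, b⟩ hx⟩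
    · rintro a' a ⟨x, hx⟩
      exact ⟨-1 + 1 * α.act a' x, hI.lmap_mem ⟨1, a'⟩ hx⟩
  rcases h₂.2 P hP with hP0 | hPuniv
  · -- projection trivial
    have hsub : ∀ p : SDP B₁ B₂, p ∈ I → p.snd = 0 := by
      intro p hp
      have hm : p.snd ∈ P := ⟨p.fst, hp⟩
      rw [hP0] at hm
      exact hm
    rcases h₁.2 J hJ with hJ0 | hJuniv
    · left
      ext p
      simp only [Set.mem_singleton_iff]
      constructor
      · intro hp
        have h2 : p.snd = 0 := hsub p hp
        have h1 : p.fst ∈ J := by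
          show (⟨p.fst, 0⟩ : SDP B₁ B₂) ∈ I
          rw [← h2]
          exact hp
        rw [hJ0] at h1
        exact SDP.ext (Set.eq_of_mem_singleton h1) h2
      · rintro rfl
        exact hI.zero_mem
    · right; left
      ext p
      simp only [Set.mem_setOf_eq]
      constructor
      · exact hsub p
      · intro hp2
        have h1 : p.fst ∈ J := by rw [hJuniv]; trivial
        have h2 : (⟨p.fst, 0⟩ : SDP B₁ B₂) ∈ I := h1
        rw [← hp2] at h2
        exact h2
  · -- projection full
    have hPall : ∀ b : B₂, ∃ x : B₁, (⟨x, b⟩ : SDP B₁ B₂) ∈ I := by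
      intro b
      have hm : b ∈ P := by rw [hPuniv]; trivial
      exact hm
    rcases h₁.2 J hJ with hJ0 | hJuniv
    · -- contradiction case
      exfalso
      have hJ0' : ∀ x : B₁, (⟨x, 0⟩ : SDP B₁ B₂) ∈ I → x = 0 := by
        intro x hx
        have hm : x ∈ J := hx
        rw [hJ0] at hm
        exact hm
      have hcomm : ∀ p : SDP B₁ B₂, p ∈ I → ∀ x : B₁,
          p.fst * α.act p.snd x = x * p.fst := by
        intro p hp x
        set q : SDP B₁ B₂ := ⟨x, 1⟩ with hqdef
        have h1 : q * p⁻¹ * q⁻¹ ∈ I := hI.mul_conj_mem q (hI.inv_mem hp)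
        have h2 : p * (q * p⁻¹ * q⁻¹) ∈ I := hI.mul_mem hp h1
        have hsnd : (p * (q * p⁻¹ * q⁻¹)).snd = 0 := by
          show p.snd * ((1 * p.snd⁻¹) * (1:B₂)⁻¹) = 0
          rw [one_mul, inv_one, mul_one, mul_inv_cancel]
          exact h02.symm
        have hfst : (p * (q * p⁻¹ * q⁻¹)).fst = 0 := by
          apply hJ0'
          rw [← hsnd]
          exact h2
        have hcu : p * (q * p⁻¹ * q⁻¹) = 1 :=
          SDP.ext (hfst.trans h01) (hsnd.trans h02)
        open scoped commutatorElement in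
        have hc2 : ⁅p, q⁆ = 1 := by
          rw [commutatorElement_def, mul_assoc p q, mul_assoc p]
          exact hcu
        have h3 : p * q = q * p := (commutatorElement_eq_one_iff_commute.mp hc2).eq
        have h5 : p.fst * α.act p.snd x = x * α.act 1 p.fst := congrArg SDP.fst h3
        rwa [α.act_one] at h5
      push_neg at hninj
      obtain ⟨a, b, hab, hne⟩ := hninj
      obtain ⟨c, hc⟩ := hPall a
      obtain ⟨c', hc'⟩ := hPall b
      have hcx : ∀ x : B₁, c * α.act a x = x * c := fun x => hcomm ⟨c, a⟩ hc x
      have hc'x : ∀ x : B₁, c' * α.act a x = x * c' := fun x => by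
        rw [hab x]; exact hcomm ⟨c', b⟩ hc' x
      have hcen : ∀ y : B₁, (c'⁻¹ * c) * y = y * (c'⁻¹ * c) := by
        intro y
        obtain ⟨x, rfl⟩ := (α.act_bijective a).2 y
        have e1 := hcx x
        have e2 := hc'x x
        have e3 : c'⁻¹ * x = α.act a x * c'⁻¹ := by
          rw [inv_mul_eq_iff_eq_mul, ← mul_assoc, e2, mul_inv_cancel_right]
        calc c'⁻¹ * c * α.act a x = c'⁻¹ * (c * α.act a x) := mul_assoc _ _ _
          _ = c'⁻¹ * (x * c) := by rw [e1]
          _ = (c'⁻¹ * x) * c := (mul_assoc _ _ _).symm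
          _ = (α.act a x * c'⁻¹) * c := by rw [e3]
          _ = α.act a x * (c'⁻¹ * c) := mul_assoc _ _ _
      have hcc' : c = c' := by
        have h6 := hcenter (c'⁻¹ * c) hcen
        exact (inv_mul_eq_one.mp h6).symm
      have hq0 : (⟨c, a⟩ : SDP B₁ B₂) * (⟨c', b⟩ : SDP B₁ B₂)⁻¹ ∈ I :=
        hI.mul_mem hc (hI.inv_mem hc')
      have hq1 : (⟨c * α.act a (α.act b⁻¹ c'⁻¹), a * b⁻¹⟩ : SDP B₁ B₂) ∈ I := hq0
      have hfst1 : c * α.act a (α.act b⁻¹ c'⁻¹) = 1 := by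
        rw [hab, ← α.act_hom, mul_inv_cancel, α.act_one, hcc', mul_inv_cancel]
      have hg : (⟨(1:B₁), a * b⁻¹⟩ : SDP B₁ B₂) ∈ I := by
        rw [← hfst1]
        exact hq1
      have hgne : a * b⁻¹ ≠ 0 := by
        intro h
        rw [h02] at h
        exact hne (mul_inv_eq_one.mp h)
      set N : Set B₂ := {d : B₂ | (⟨(1:B₁), d⟩ : SDP B₁ B₂) ∈ I} with hNdef
      have h11 : (1:B₁) + 1 = 1 := by rw [← h01, add_zero]
      have hneg1 : -(1:B₁) = 1 := by rw [← h01, neg_zero]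
      have hNideal : IsIdeal N := by
        constructor
        · show (⟨(1:B₁), (0:B₂)⟩ : SDP B₁ B₂) ∈ I
          rw [← h01]
          exact hI.zero_mem
        · intro d e hd he
          have hd' : (⟨(1:B₁), d⟩ : SDP B₁ B₂) ∈ I := hd
          have he' : (⟨(1:B₁), e⟩ : SDP B₁ B₂) ∈ I := he
          have h : (⟨(1:B₁) + 1, d + e⟩ : SDP B₁ B₂) ∈ I := hI.add_mem hd' he'
          rw [h11] at h
          exact h
        · intro d hd
          have hd' : (⟨(1:B₁), d⟩ : SDP B₁ B₂) ∈ I := hd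
          have h : (⟨-(1:B₁), -d⟩ : SDP B₁ B₂) ∈ I := hI.neg_mem hd'
          rw [hneg1] at h
          exact h
        · intro b' d hd
          have hd' : (⟨(1:B₁), d⟩ : SDP B₁ B₂) ∈ I := hd
          have h : (⟨(0:B₁) + 1 + -0, b' + d + -b'⟩ : SDP B₁ B₂) ∈ I :=
            hI.add_conj_mem ⟨0, b'⟩ hd'
          rw [zero_add, neg_zero, add_zero] at h
          exact h
        · intro d e hd he
          have hd' : (⟨(1:B₁), d⟩ : SDP B₁ B₂) ∈ I := hd
          have he' : (⟨(1:B₁), e⟩ : SDP B₁ B₂) ∈ I := he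
          have h : (⟨(1:B₁) * α.act d 1, d * e⟩ : SDP B₁ B₂) ∈ I := hI.mul_mem hd' he'
          rw [α.act_one', one_mul] at h
          exact h
        · intro d hd
          have hd' : (⟨(1:B₁), d⟩ : SDP B₁ B₂) ∈ I := hd
          have h : (⟨α.act d⁻¹ (1:B₁)⁻¹, d⁻¹⟩ : SDP B₁ B₂) ∈ I := hI.inv_mem hd'
          rw [inv_one, α.act_one'] at h
          exact h
        · intro b' d hd
          have hd' : (⟨(1:B₁), d⟩ : SDP B₁ B₂) ∈ I := hd
          have h : (⟨((1:B₁) * α.act b' 1) * α.act (b' * d) (α.act b'⁻¹ (1:B₁)⁻¹),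
              (b' * d) * b'⁻¹⟩ : SDP B₁ B₂) ∈ I := hI.mul_conj_mem ⟨1, b'⟩ hd'
          simp only [α.act_one', one_mul, inv_one] at h
          exact h
        · intro a' d hd
          have hd' : (⟨(1:B₁), d⟩ : SDP B₁ B₂) ∈ I := hd
          have h : (⟨-(1:B₁) + 1 * α.act a' 1, -a' + a' * d⟩ : SDP B₁ B₂) ∈ I :=
            hI.lmap_mem ⟨1, a'⟩ hd'
          simp only [α.act_one', one_mul, neg_add_cancel] at h
          rw [h01] at h
          exact h
      rcases h₂.2 N hNideal with hN0 | hNuniv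
      · apply hgne
        have hm : a * b⁻¹ ∈ N := hg
        rw [hN0] at hm
        exact hm
      · obtain ⟨a₀, x₀, hx₀⟩ := hα
        apply hx₀
        have hm : a₀ ∈ N := by rw [hNuniv]; trivial
        have hm' : (⟨(1:B₁), a₀⟩ : SDP B₁ B₂) ∈ I := hm
        have h7 : (1:B₁) * α.act a₀ x₀ = x₀ * 1 := hcomm ⟨1, a₀⟩ hm' x₀
        rwa [one_mul, mul_one] at h7
    · -- I is everything
      right; right
      apply Set.eq_univ_of_forall
      intro p
      obtain ⟨c, hc⟩ := hPall p.snd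
      have h1 : p.fst + -c ∈ J := by rw [hJuniv]; trivial
      have h1' : (⟨p.fst + -c, (0:B₂)⟩ : SDP B₁ B₂) ∈ I := h1
      have h2 : (⟨p.fst + -c + c, (0:B₂) + p.snd⟩ : SDP B₁ B₂) ∈ I := hI.add_mem h1' hc
      rw [neg_add_cancel_right, zero_add] at h2
      exact h2
end

section
/- Let B₁ and B₂ be simple skew left braces and α : (B₂,∘) → Aut(B₁,+,∘) a non-trivial group homomorphism. Suppose moreover that for every a ∈ B₂ with a ≠ 0, the map α_a is not an inner automorphism of the group (B₁,∘) (i.e. α_a ≠ i_g for every g ∈ B₁, where i_g(h) := g⁻ ∘ h ∘ g). Then the only ideals of B₁ ⋊_α B₂ are {(0,0)}, B₁ × {0}, and B₁ ⋊_α B₂. -/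
open SkewLeftBrace

/-- If `B₁`, `B₂` are simple, `α` is non-trivial, and no `α_a` (for `a ≠ 0`) is an
inner automorphism of `(B₁,∘)`, then the only ideals of `B₁ ⋊_α B₂` are `{0}`,
`B₁ × {0}` and the whole brace. -/
theorem ideals_of_sdp_of_outer {B₁ B₂ : Type*} [SkewLeftBrace B₁] [SkewLeftBrace B₂]
    (h₁ : SkewLeftBrace.Simple B₁) (h₂ : SkewLeftBrace.Simple B₂)
    (α : BraceActionHom B₂ B₁)
    (hα : ∃ (a : B₂) (x : B₁), α.act a x ≠ x)
    (houter : ∀ a : B₂, a ≠ 0 → ∀ g : B₁, α.act a ≠ fun h => g⁻¹ * h * g) :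
    ∀ I : Set (SDP B₁ B₂), @IsIdeal _ α.sdp I →
      I = {SDP.mk 0 0} ∨ I = {p : SDP B₁ B₂ | p.snd = 0} ∨ I = Set.univ := by
  intro I hI
  letI inst : SkewLeftBrace (SDP B₁ B₂) := α.sdp
  have z2 : (0 : B₂) = 1 := zero_eq_one
  have z1 : (0 : B₁) = 1 := zero_eq_one
  have act0 : ∀ x : B₁, α.act 0 x = x := fun x => by rw [z2]; exact α.act_one x
  have actinv : ∀ (a : B₂) (x : B₁), α.act a (α.act a⁻¹ x) = x := fun a x => by
    rw [← α.act_hom, mul_inv_cancel]; exact α.act_one x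
  have zmul : ∀ a : B₂, (0:B₂) * a = a := fun a => by rw [z2, one_mul]
  have mulz : ∀ a : B₂, a * (0:B₂) = a := fun a => mul_zero' a
  have invz : ((0:B₂))⁻¹ = 0 := by rw [z2, inv_one]
  set J : Set B₁ := {x : B₁ | (⟨x, 0⟩ : SDP B₁ B₂) ∈ I} with hJdef
  set K : Set B₂ := {y : B₂ | ∃ x : B₁, (⟨x, y⟩ : SDP B₁ B₂) ∈ I} with hKdef
  have hJ : IsIdeal J := by
    refine ⟨hI.zero_mem, ?_, ?_, ?_, ?_, ?_, ?_, ?_⟩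
    · intro x y hx hy
      have e : (⟨x,0⟩ + ⟨y,0⟩ : SDP B₁ B₂) = ⟨x + y, 0⟩ := SDP.ext rfl (add_zero 0)
      show (⟨x + y, 0⟩ : SDP B₁ B₂) ∈ I
      exact e ▸ hI.add_mem hx hy
    · intro x hx
      have e : (-⟨x,0⟩ : SDP B₁ B₂) = ⟨-x, 0⟩ := SDP.ext rfl neg_zero
      show (⟨-x, 0⟩ : SDP B₁ B₂) ∈ I
      exact e ▸ hI.neg_mem hx
    · intro b x hx
      have e : (⟨b,0⟩ + ⟨x,0⟩ + -⟨b,0⟩ : SDP B₁ B₂) = ⟨b + x + -b, 0⟩ :=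
        SDP.ext rfl (by show (0:B₂) + 0 + -0 = 0; simp)
      show (⟨b + x + -b, 0⟩ : SDP B₁ B₂) ∈ I
      exact e ▸ hI.add_conj_mem ⟨b,0⟩ hx
    · intro x y hx hy
      have e : (⟨x,0⟩ * ⟨y,0⟩ : SDP B₁ B₂) = ⟨x * y, 0⟩ :=
        SDP.ext (by show x * α.act 0 y = x * y; rw [act0]) (mulz 0)
      show (⟨x * y, 0⟩ : SDP B₁ B₂) ∈ I
      exact e ▸ hI.mul_mem hx hy
    · intro x hx
      have e : ((⟨x,0⟩ : SDP B₁ B₂))⁻¹ = ⟨x⁻¹, 0⟩ :=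
        SDP.ext (by show α.act (0:B₂)⁻¹ x⁻¹ = x⁻¹; rw [invz, act0]) invz
      show (⟨x⁻¹, 0⟩ : SDP B₁ B₂) ∈ I
      exact e ▸ hI.inv_mem hx
    · intro b x hx
      have e : (⟨b,0⟩ * ⟨x,0⟩ * (⟨b,0⟩)⁻¹ : SDP B₁ B₂) = ⟨b * x * b⁻¹, 0⟩ := by
        refine SDP.ext ?_ ?_
        · show (b * α.act 0 x) * α.act ((0:B₂) * 0) (α.act (0:B₂)⁻¹ b⁻¹) = b * x * b⁻¹
          rw [act0, zmul, invz, act0, act0]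
        · show ((0:B₂) * 0) * (0:B₂)⁻¹ = 0
          rw [zmul, invz, mulz]
      show (⟨b * x * b⁻¹, 0⟩ : SDP B₁ B₂) ∈ I
      exact e ▸ hI.mul_conj_mem ⟨b,0⟩ hx
    · intro a x hx
      have e : lmap (⟨a,0⟩ : SDP B₁ B₂) ⟨x,0⟩ = ⟨lmap a x, 0⟩ := by
        refine SDP.ext ?_ ?_
        · show -a + a * α.act 0 x = lmap a x
          rw [act0]; rfl
        · show -(0:B₂) + (0:B₂) * 0 = 0
          rw [zmul, neg_zero, zero_add]
      show (⟨lmap a x, 0⟩ : SDP B₁ B₂) ∈ I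
      exact e ▸ hI.lmap_mem ⟨a,0⟩ hx
  have hK : IsIdeal K := by
    refine ⟨⟨0, hI.zero_mem⟩, ?_, ?_, ?_, ?_, ?_, ?_, ?_⟩
    · rintro y y' ⟨x, hx⟩ ⟨x', hx'⟩
      exact ⟨x + x', hI.add_mem hx hx'⟩
    · rintro y ⟨x, hx⟩
      exact ⟨-x, hI.neg_mem hx⟩
    · rintro b y ⟨x, hx⟩
      exact ⟨0 + x + -0, hI.add_conj_mem ⟨0,b⟩ hx⟩
    · rintro y y' ⟨x, hx⟩ ⟨x', hx'⟩
      exact ⟨x * α.act y x', hI.mul_mem hx hx'⟩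
    · rintro y ⟨x, hx⟩
      exact ⟨α.act y⁻¹ x⁻¹, hI.inv_mem hx⟩
    · rintro b y ⟨x, hx⟩
      exact ⟨((0:B₁) * α.act b x) * α.act (b * y) (α.act b⁻¹ (0:B₁)⁻¹),
        hI.mul_conj_mem ⟨0,b⟩ hx⟩
    · rintro a y ⟨x, hx⟩
      exact ⟨-(0:B₁) + (0:B₁) * α.act a x, hI.lmap_mem ⟨0,a⟩ hx⟩
  rcases h₂.2 K hK with hK0 | hKu
  · have hsub : ∀ p : SDP B₁ B₂, p ∈ I → p.snd = 0 := by
      intro p hp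
      have hm : p.snd ∈ K := ⟨p.fst, hp⟩
      rw [hK0] at hm
      exact hm
    rcases h₁.2 J hJ with hJ0 | hJu
    · left
      ext p
      simp only [Set.mem_singleton_iff]
      constructor
      · intro hp
        have h2 : p.snd = 0 := hsub p hp
        have h1 : p.fst ∈ J := by
          show (⟨p.fst, 0⟩ : SDP B₁ B₂) ∈ I
          rw [← h2]
          exact hp
        rw [hJ0] at h1
        exact SDP.ext h1 h2
      · rintro rfl
        exact hI.zero_mem
    · right; left
      ext p
      simp only [Set.mem_setOf_eq]
      constructor
      · exact hsub p
      · intro hp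
        have h1 : p.fst ∈ J := by rw [hJu]; trivial
        have e : (⟨p.fst, 0⟩ : SDP B₁ B₂) = p := SDP.ext rfl hp.symm
        rw [← e]
        exact h1
  · right; right
    have hJne : J ≠ {0} := by
      intro hJ0
      have hex : ∃ a : B₂, a ≠ 0 := by
        by_contra hcon
        push_neg at hcon
        apply h₂.1
        ext y
        simp [hcon y]
      obtain ⟨a, ha⟩ := hex
      obtain ⟨g, hg⟩ : a ∈ K := by rw [hKu]; trivial
      apply houter a ha g
      funext h
      show α.act a h = g⁻¹ * h * g
      have hw : (⟨h⁻¹,0⟩ * ⟨g,a⟩ * (⟨h⁻¹,0⟩)⁻¹ * (⟨g,a⟩)⁻¹ : SDP B₁ B₂) ∈ I :=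
        hI.mul_mem (hI.mul_conj_mem ⟨h⁻¹,0⟩ hg) (hI.inv_mem hg)
      have hsnd : ((⟨h⁻¹,0⟩ * ⟨g,a⟩ * (⟨h⁻¹,0⟩)⁻¹ * (⟨g,a⟩)⁻¹ : SDP B₁ B₂)).snd = 0 := by
        show (((0:B₂) * a) * (0:B₂)⁻¹) * a⁻¹ = 0
        rw [zmul, invz, mulz, mul_inv_cancel]
        exact z2.symm
      have hfst : ((⟨h⁻¹,0⟩ * ⟨g,a⟩ * (⟨h⁻¹,0⟩)⁻¹ * (⟨g,a⟩)⁻¹ : SDP B₁ B₂)).fst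
          = h⁻¹ * g * α.act a h * g⁻¹ := by
        show ((h⁻¹ * α.act 0 g) * α.act ((0:B₂)*a) (α.act (0:B₂)⁻¹ h⁻¹⁻¹)) *
            α.act (((0:B₂)*a) * (0:B₂)⁻¹) (α.act a⁻¹ g⁻¹) = h⁻¹ * g * α.act a h * g⁻¹
        rw [act0, zmul, invz, act0, mulz, actinv, inv_inv]
      have hmem : h⁻¹ * g * α.act a h * g⁻¹ ∈ J := by
        show (⟨h⁻¹ * g * α.act a h * g⁻¹, 0⟩ : SDP B₁ B₂) ∈ I
        have e : (⟨h⁻¹,0⟩ * ⟨g,a⟩ * (⟨h⁻¹,0⟩)⁻¹ * (⟨g,a⟩)⁻¹ : SDP B₁ B₂)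
            = ⟨h⁻¹ * g * α.act a h * g⁻¹, 0⟩ := SDP.ext hfst hsnd
        exact e ▸ hw
      rw [hJ0] at hmem
      have he : h⁻¹ * g * α.act a h * g⁻¹ = 0 := hmem
      rw [z1, mul_inv_eq_one] at he
      -- he : h⁻¹ * g * α.act a h = g
      have hX2 : α.act a h = (h⁻¹ * g)⁻¹ * (h⁻¹ * g * α.act a h) := by
        rw [inv_mul_cancel_left]
      rw [he] at hX2
      rw [hX2, mul_inv_rev, inv_inv]
    have hJu : J = Set.univ := (h₁.2 J hJ).resolve_left hJne
    ext p
    simp only [Set.mem_univ, iff_true]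
    obtain ⟨g', hg'⟩ : p.snd ∈ K := by rw [hKu]; trivial
    have h1 : p.fst - g' ∈ J := by rw [hJu]; trivial
    have hs := hI.add_mem h1 hg'
    have e : (⟨p.fst - g', 0⟩ + ⟨g', p.snd⟩ : SDP B₁ B₂) = p :=
      SDP.ext (sub_add_cancel _ _) (zero_add _)
    rw [← e]
    exact hs
end

section
/- Let B be a skew left brace whose ideals are exactly {0}, J, and B, where {0}, J, B are pairwise distinct. Suppose that J, regarded as a skew left brace with the restricted operations, is simple and is not a trivial skew left brace (i.e. the operations + and ∘ do not coincide on J). Then B is strongly prime. -/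
open SkewLeftBrace


namespace SkewLeftBrace

variable {B : Type*} [SkewLeftBrace B]

theorem mul_add_eq2 (a b c : B) : a * (b + c) = a * b + -a + a * c := by
  rw [SkewLeftBrace.mul_add_eq, sub_eq_add_neg]

theorem neg_mul2 (a b : B) : a * (-b) = a + -(a * b) + a := by
  have h := mul_add_eq2 a b (-b)
  rw [add_neg_cancel, mul_zero'] at h
  calc a * (-b) = -(a*b + -a) + (a*b + -a + a*(-b)) := by rw [neg_add_cancel_left]
  _ = -(a*b + -a) + a := by rw [← h]
  _ = a + -(a*b) + a := by rw [neg_add_rev, neg_neg, add_assoc]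

theorem lmap_add' (a b c : B) : lmap a (b + c) = lmap a b + lmap a c := by
  simp [lmap, mul_add_eq2, add_assoc]

theorem lmap_zero' (a : B) : lmap a 0 = 0 := by simp [lmap, mul_zero']

theorem lmap_neg' (a b : B) : lmap a (-b) = -(lmap a b) := by
  simp [lmap, neg_mul2, add_assoc]

theorem key6 (a b c : B) : lmap a (bstar b c) = bstar (a*b) c + -(bstar a c) := by
  simp [lmap, bstar, sub_eq_add_neg, mul_add_eq2, neg_mul2, mul_assoc, add_assoc, neg_add_rev]

theorem key7 (a b c : B) : b + bstar a c + -b = -(bstar a b) + bstar a (b + c) := by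
  simp [bstar, sub_eq_add_neg, mul_add_eq2, neg_mul2, mul_assoc, add_assoc, neg_add_rev]

theorem mul_eq_add_lmap (x y : B) : x * y = x + lmap x y := by simp [lmap]

theorem inv_eq_lmap (x : B) : x⁻¹ = lmap x⁻¹ (-x) := by
  simp [lmap, neg_mul2, inv_mul_cancel, ← zero_eq_one, add_assoc]

theorem key10 (b x : B) : b * x * b⁻¹ = b + (bstar b x + x + lmap b (bstar x b⁻¹)) + -b := by
  simp [lmap, bstar, sub_eq_add_neg, mul_add_eq2, neg_mul2, mul_assoc, add_assoc, neg_add_rev,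
    mul_inv_cancel, ← zero_eq_one]

theorem setStar_mono {X X' Y Y' : Set B} (hX : X ⊆ X') (hY : Y ⊆ Y') :
    setStar X Y ⊆ setStar X' Y' := by
  apply AddSubgroup.closure_mono
  rintro z ⟨x, hx, y, hy, rfl⟩
  exact ⟨x, hX hx, y, hY hy, rfl⟩

section
variable {J : Set B}

theorem bstar_mem (hJ : IsIdeal J) {x y : B} (hx : x ∈ J) (hy : y ∈ J) : bstar x y ∈ J := by
  have := hJ.add_mem (hJ.add_mem (hJ.neg_mem hx) (hJ.mul_mem hx hy)) (hJ.neg_mem hy)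
  simpa [bstar, sub_eq_add_neg, add_assoc] using this

theorem mem_setStar (hJ : IsIdeal J) {x y : B} (hx : x ∈ J) (hy : y ∈ J) :
    bstar x y ∈ setStar J J :=
  AddSubgroup.subset_closure ⟨x, hx, y, hy, rfl⟩

theorem setStar_self_subset (hJ : IsIdeal J) : setStar J J ⊆ J := by
  intro z hz
  refine AddSubgroup.closure_induction (p := fun w _ => w ∈ J) ?_ hJ.zero_mem
    (fun x y _ _ hx hy => hJ.add_mem hx hy) (fun x _ hx => hJ.neg_mem hx) hz
  rintro w ⟨x, hx, y, hy, rfl⟩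
  exact bstar_mem hJ hx hy

theorem lmap_setStar (hJ : IsIdeal J) {a : B} (ha : a ∈ J) {z : B} (hz : z ∈ setStar J J) :
    lmap a z ∈ setStar J J := by
  refine AddSubgroup.closure_induction (p := fun w _ => lmap a w ∈ setStar J J) ?_ ?_ ?_ ?_ hz
  · rintro w ⟨x, hx, y, hy, rfl⟩
    rw [key6]
    exact AddSubgroup.add_mem _ (mem_setStar hJ (hJ.mul_mem ha hx) hy)
      (AddSubgroup.neg_mem _ (mem_setStar hJ ha hy))
  · show lmap a (0:B) ∈ setStar J J
    rw [lmap_zero']; exact AddSubgroup.zero_mem _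
  · intro x y _ _ hx hy
    show lmap a (x + y) ∈ setStar J J
    rw [lmap_add']; exact AddSubgroup.add_mem _ hx hy
  · intro x _ hx
    show lmap a (-x) ∈ setStar J J
    rw [lmap_neg']; exact AddSubgroup.neg_mem _ hx

theorem conj_setStar (hJ : IsIdeal J) {b : B} (hb : b ∈ J) {z : B} (hz : z ∈ setStar J J) :
    b + z + -b ∈ setStar J J := by
  refine AddSubgroup.closure_induction (p := fun w _ => b + w + -b ∈ setStar J J) ?_ ?_ ?_ ?_ hz
  · rintro w ⟨x, hx, y, hy, rfl⟩
    show b + bstar x y + -b ∈ setStar J J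
    rw [key7]
    exact AddSubgroup.add_mem _ (AddSubgroup.neg_mem _ (mem_setStar hJ hx hb))
      (mem_setStar hJ hx (hJ.add_mem hb hy))
  · simp only [add_zero, add_neg_cancel]; exact AddSubgroup.zero_mem _
  · intro x y _ _ hx hy
    show b + (x + y) + -b ∈ setStar J J
    have h2 : b + (x + y) + -b = (b + x + -b) + (b + y + -b) := by
      simp [add_assoc]
    rw [h2]; exact AddSubgroup.add_mem _ hx hy
  · intro x _ hx
    show b + (-x) + -b ∈ setStar J J
    have h2 : b + -x + -b = -(b + x + -b) := by simp [neg_add_rev, add_assoc]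
    rw [h2]; exact AddSubgroup.neg_mem _ hx

theorem mul_setStar (hJ : IsIdeal J) {x y : B} (hx : x ∈ setStar J J) (hy : y ∈ setStar J J) :
    x * y ∈ setStar J J := by
  rw [mul_eq_add_lmap]
  exact AddSubgroup.add_mem _ hx (lmap_setStar hJ (setStar_self_subset hJ hx) hy)

theorem inv_setStar (hJ : IsIdeal J) {x : B} (hx : x ∈ setStar J J) :
    x⁻¹ ∈ setStar J J := by
  rw [inv_eq_lmap]
  exact lmap_setStar hJ (hJ.inv_mem (setStar_self_subset hJ hx)) (AddSubgroup.neg_mem _ hx)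

theorem mul_conj_setStar (hJ : IsIdeal J) {b : B} (hb : b ∈ J) {x : B} (hx : x ∈ setStar J J) :
    b * x * b⁻¹ ∈ setStar J J := by
  rw [key10]
  have hxJ := setStar_self_subset hJ hx
  exact conj_setStar hJ hb (AddSubgroup.add_mem _ (AddSubgroup.add_mem _
    (mem_setStar hJ hb hxJ) hx) (lmap_setStar hJ hb (mem_setStar hJ hxJ (hJ.inv_mem hb))))

end
end SkewLeftBrace

/-- If a skew left brace `B` has exactly the three (pairwise distinct) ideals `{0}`,
`J`, `B`, and `J` is a simple, non-trivial skew left brace, then `B` is strongly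
prime. -/
theorem stronglyPrime_of_unique_simple_ideal {B : Type*} [SkewLeftBrace B]
    (J : Set B) (hJ : IsIdeal J)
    (h0J : ({0} : Set B) ≠ J) (h0U : ({0} : Set B) ≠ Set.univ) (hJU : J ≠ Set.univ)
    (hclass : ∀ I : Set B, IsIdeal I → I = {0} ∨ I = J ∨ I = Set.univ)
    (hsimple : @SkewLeftBrace.Simple _ hJ.brace)
    (hnontriv : ∃ a ∈ J, ∃ b ∈ J, a * b ≠ a + b) :
    SkewLeftBrace.StronglyPrime B := by
  letI : SkewLeftBrace ↥J := hJ.brace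
  -- The set of elements of J lying in J*J is an ideal of the brace J
  have hidem : setStar J J = J := by
    set A : Set ↥J := {x : ↥J | (x : B) ∈ setStar J J} with hA
    have hIdeal : IsIdeal A := by
      refine ⟨?_, ?_, ?_, ?_, ?_, ?_, ?_, ?_⟩
      · show ((0 : ↥J) : B) ∈ setStar J J
        exact AddSubgroup.zero_mem _
      · intro x y hx hy
        show ((x : B) + (y : B)) ∈ setStar J J
        exact AddSubgroup.add_mem _ hx hy
      · intro x hx
        show (-(x : B)) ∈ setStar J J
        exact AddSubgroup.neg_mem _ hx
      · intro b x hx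
        show ((b : B) + (x : B) + -(b : B)) ∈ setStar J J
        exact conj_setStar hJ b.2 hx
      · intro x y hx hy
        show ((x : B) * (y : B)) ∈ setStar J J
        exact mul_setStar hJ hx hy
      · intro x hx
        show ((x : B)⁻¹) ∈ setStar J J
        exact inv_setStar hJ hx
      · intro b x hx
        show ((b : B) * (x : B) * (b : B)⁻¹) ∈ setStar J J
        exact mul_conj_setStar hJ b.2 hx
      · intro a x hx
        show (-(a : B) + (a : B) * (x : B)) ∈ setStar J J
        exact lmap_setStar hJ a.2 hx
    rcases hsimple.2 A hIdeal with h | h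
    · exfalso
      obtain ⟨a, ha, b, hb, hne⟩ := hnontriv
      have hw : (⟨bstar a b, bstar_mem hJ ha hb⟩ : ↥J) ∈ A := mem_setStar hJ ha hb
      rw [h] at hw
      have hw0 : bstar a b = (0 : B) := congrArg Subtype.val hw
      apply hne
      rw [bstar, sub_eq_zero] at hw0
      calc a * b = a + (-a + a * b) := (add_neg_cancel_left a _).symm
      _ = a + b := by rw [hw0]
    · refine Set.Subset.antisymm (setStar_self_subset hJ) ?_
      intro x hx
      have : (⟨x, hx⟩ : ↥J) ∈ A := h ▸ Set.mem_univ _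
      exact this
  have key : ∀ X : Set B, IsStarProdOfNonzeroIdeals X → J ⊆ X := by
    intro X hX
    induction hX with
    | @ideal I hI hne =>
      rcases hclass I hI with h | h | h
      · exact absurd h hne
      · rw [h]
      · rw [h]; exact Set.subset_univ _
    | star hX1 hY1 ih1 ih2 =>
      refine subset_trans ?_ (setStar_mono ih1 ih2)
      rw [hidem]
  intro X hX hX0
  have hJX := key X hX
  rw [hX0] at hJX
  exact h0J (Set.Subset.antisymm (Set.singleton_subset_iff.mpr hJ.zero_mem) hJX)
end
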